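/- arXiv:0908.0143 — 3 statements merged into one kernel-verified Lean document; each statement's English description precedes it below -/
import Mathlib

section
/- Weak duality holds between the penalized maximum likelihood problem and its dual: for any symmetric positive definite X and any symmetric positive definite U with |U_{ij} − Σ_{ij}| ≤ ρ for all i,j, one has log det X − Tr(ΣX) − ρ‖X‖₁ ≤ −log det U − n. -/
open Matrix Finset
open scoped MatrixOrder

lemma trace_eq_sum_eigs {n : ℕ} {A : Matrix (Fin n) (Fin n) ℝ} (hA : A.IsHermitian) :
    A.trace = ∑ i, hA.eigenvalues i := by
  simpa using hA.trace_eq_sum_eigenvalues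

lemma log_det_le {n : ℕ} {M : Matrix (Fin n) (Fin n) ℝ} (hM : M.PosDef) :
    Real.log M.det ≤ M.trace - n := by
  rw [hM.isHermitian.det_eq_prod_eigenvalues, trace_eq_sum_eigs hM.isHermitian]
  simp only [RCLike.ofReal_real_eq_id, id_eq]
  rw [Real.log_prod (fun i _ => (hM.eigenvalues_pos i).ne')]
  have : ∑ i, hM.isHermitian.eigenvalues i - (n : ℝ)
      = ∑ i : Fin n, (hM.isHermitian.eigenvalues i - 1) := by
    rw [Finset.sum_sub_distrib]; simp
  rw [this]
  exact Finset.sum_le_sum fun i _ =>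
    Real.log_le_sub_one_of_pos (hM.eigenvalues_pos i)

lemma posdef_conj {n : ℕ} {X B : Matrix (Fin n) (Fin n) ℝ} (hX : X.PosDef)
    (hB : IsUnit B) : (B * X * Bᴴ).PosDef := by
  exact hX.mul_mul_conjTranspose_same (Matrix.vecMul_injective_of_isUnit hB)

/-- Weak duality for the penalized maximum likelihood problem: for any feasible
primal point `X` and dual point `U`, the primal objective is at most the dual one. -/
theorem covsel_weak_duality (n : ℕ) (S : Matrix (Fin n) (Fin n) ℝ) (hS : S.IsSymm)
    (ρ : ℝ) (hρ : 0 < ρ)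
    (X U : Matrix (Fin n) (Fin n) ℝ)
    (hXs : X.IsSymm) (hX : X.PosDef)
    (hUs : U.IsSymm) (hU : U.PosDef)
    (hfeas : ∀ i j, |U i j - S i j| ≤ ρ) :
    Real.log X.det - (S * X).trace - ρ * ∑ i, ∑ j, |X i j| ≤
      -Real.log U.det - n := by
  classical
  set B := CFC.sqrt U with hBdef
  have hBpsd : B.PosSemidef := (CFC.sqrt_nonneg U).posSemidef
  have hBB : B * B = U := CFC.sqrt_mul_sqrt_self U hU.posSemidef.nonneg
  have hBherm : Bᴴ = B := hBpsd.isHermitian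
  have hdetB : B.det * B.det = U.det := by rw [← Matrix.det_mul, hBB]
  have hdetBne : B.det ≠ 0 := by
    intro h
    rw [h, mul_zero] at hdetB
    exact hU.det_pos.ne hdetB
  have hBunit : IsUnit B := (Matrix.isUnit_iff_isUnit_det B).mpr hdetBne.isUnit
  have hM : (B * X * Bᴴ).PosDef := posdef_conj hX hBunit
  have key := log_det_le hM
  have hdet : (B * X * Bᴴ).det = U.det * X.det := by
    rw [hBherm, Matrix.det_mul, Matrix.det_mul, ← hdetB]; ring
  have htr : (B * X * Bᴴ).trace = (U * X).trace := by
    rw [hBherm, Matrix.trace_mul_cycle, hBB]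
  rw [hdet, htr, Real.log_mul hU.det_pos.ne' hX.det_pos.ne'] at key
  -- trace bound
  have htrb : (U * X).trace ≤ (S * X).trace + ρ * ∑ i, ∑ j, |X i j| := by
    have h1 : (U * X).trace - (S * X).trace = ∑ i, ∑ j, (U i j - S i j) * X j i := by
      simp only [Matrix.trace, Matrix.diag, Matrix.mul_apply, ← Finset.sum_sub_distrib]
      congr 1; ext i; congr 1; ext j; ring
    have h2 : ∑ i, ∑ j, (U i j - S i j) * X j i ≤ ρ * ∑ i, ∑ j, |X i j| := by
      rw [Finset.mul_sum]
      refine Finset.sum_le_sum fun i _ => ?_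
      rw [Finset.mul_sum]
      refine Finset.sum_le_sum fun j _ => ?_
      calc (U i j - S i j) * X j i ≤ |(U i j - S i j) * X j i| := le_abs_self _
        _ = |U i j - S i j| * |X j i| := abs_mul _ _
        _ ≤ ρ * |X j i| := by
            exact mul_le_mul_of_nonneg_right (hfeas i j) (abs_nonneg _)
        _ = ρ * |X i j| := by rw [hXs.apply i j]
      -- note: X j i = X i j by symmetry
    linarith [h1, h2]
  linarith [key, htrb]
end

section
/- If X is positive definite and U is positive definite with Tr(XU) = n and log det X − Tr(ΣX) − ρ‖X‖₁ = −log det U − n (i.e., the primal and dual objectives coincide), and U satisfies the dual constraints |U_{ij} − Σ_{ij}| ≤ ρ, then U = X⁻¹. -/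
open Matrix Finset

/-- A positive semidefinite matrix with trace `n` and nonnegative log-determinant
is the identity. -/
lemma psd_trace_logdet_eq_one (n : ℕ) (M : Matrix (Fin n) (Fin n) ℝ) (hM : M.PosSemidef)
    (htr : M.trace = (n : ℝ)) (hdet : 0 < M.det) (hlog : 0 ≤ Real.log M.det) :
    M = 1 := by
  set μ := hM.1.eigenvalues with hμdef
  have hμnn : ∀ i, 0 ≤ μ i := hM.eigenvalues_nonneg
  have hdet_eq : M.det = ∏ i, μ i := by
    have := hM.1.det_eq_prod_eigenvalues
    simpa using this
  have hμpos : ∀ i, 0 < μ i := by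
    intro i
    rcases (hμnn i).lt_or_eq with h | h
    · exact h
    · exfalso
      have : M.det = 0 := by
        rw [hdet_eq]
        exact Finset.prod_eq_zero (Finset.mem_univ i) h.symm
      exact hdet.ne' this
  have htr_eq : M.trace = ∑ i, μ i := by
    conv_lhs => rw [hM.1.spectral_theorem]
    rw [Unitary.conjStarAlgAut_apply, Matrix.trace_mul_comm, ← Matrix.mul_assoc]
    have : (star (hM.1.eigenvectorUnitary : Matrix (Fin n) (Fin n) ℝ)) *
        (hM.1.eigenvectorUnitary : Matrix (Fin n) (Fin n) ℝ) = 1 :=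
      Matrix.UnitaryGroup.star_mul_self _
    rw [this, Matrix.one_mul, Matrix.trace_diagonal]
    simp [hμdef]
  have hlogdet : Real.log M.det = ∑ i, Real.log (μ i) := by
    rw [hdet_eq]
    exact Real.log_prod fun i _ => (hμpos i).ne'
  have hsum0 : ∑ i, (μ i - 1 - Real.log (μ i)) = 0 := by
    have h1 : ∑ i, (μ i - 1 - Real.log (μ i))
        = M.trace - n - Real.log M.det := by
      rw [htr_eq, hlogdet]
      simp [Finset.sum_sub_distrib]
    have h3 : ∑ i, (μ i - 1 - Real.log (μ i)) ≤ 0 := by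
      rw [h1, htr]; linarith
    have h4 : 0 ≤ ∑ i, (μ i - 1 - Real.log (μ i)) :=
      Finset.sum_nonneg fun i _ => by
        have := Real.log_le_sub_one_of_pos (hμpos i); linarith
    linarith
  have hμ1 : ∀ i, μ i = 1 := by
    intro i
    by_contra hne
    have hlt : Real.log (μ i) < μ i - 1 :=
      Real.log_lt_sub_one_of_pos (hμpos i) hne
    have := (Finset.sum_eq_zero_iff_of_nonneg (fun i _ => by
      have := Real.log_le_sub_one_of_pos (hμpos i); linarith)).mp hsum0 i (Finset.mem_univ i)
    linarith
  conv_lhs => rw [hM.1.spectral_theorem]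
  have hfun : (RCLike.ofReal ∘ μ : Fin n → ℝ) = fun _ => 1 := by
    funext i; simp [hμ1 i]
  rw [hfun, Matrix.diagonal_one, Unitary.conjStarAlgAut_apply, Matrix.mul_one]
  exact Unitary.mul_star_self_of_mem (hM.1.eigenvectorUnitary).2

/-- If primal and dual objectives coincide at feasible points with `Tr(XU) = n`,
then `U = X⁻¹`. -/
theorem covsel_optimality_complementarity (n : ℕ) (S : Matrix (Fin n) (Fin n) ℝ)
    (hS : S.IsSymm) (ρ : ℝ) (hρ : 0 < ρ)
    (X U : Matrix (Fin n) (Fin n) ℝ)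
    (hXs : X.IsSymm) (hX : X.PosDef)
    (hUs : U.IsSymm) (hU : U.PosDef)
    (hfeas : ∀ i j, |U i j - S i j| ≤ ρ)
    (htr : (X * U).trace = (n : ℝ))
    (heq : Real.log X.det - (S * X).trace - ρ * ∑ i, ∑ j, |X i j| =
      -Real.log U.det - n) :
    U = X⁻¹ := by
  -- Step 1: feasibility gives the trace inequality, hence log det X + log det U ≥ 0.
  have hineq : (n : ℝ) ≤ (S * X).trace + ρ * ∑ i, ∑ j, |X i j| := by
    have hXU : (X * U).trace = ∑ i, ∑ j, X i j * U j i := by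
      simp [Matrix.trace, Matrix.mul_apply, Matrix.diag]
    have hSX : (S * X).trace = ∑ i, ∑ j, X i j * S j i := by
      rw [Matrix.trace_mul_comm]
      simp [Matrix.trace, Matrix.mul_apply, Matrix.diag]
    have key : ∑ i, ∑ j, X i j * (U j i - S j i) ≤ ρ * ∑ i, ∑ j, |X i j| := by
      rw [Finset.mul_sum]
      refine Finset.sum_le_sum fun i _ => ?_
      rw [Finset.mul_sum]
      refine Finset.sum_le_sum fun j _ => ?_
      calc X i j * (U j i - S j i) ≤ |X i j * (U j i - S j i)| := le_abs_self _
        _ = |X i j| * |U j i - S j i| := abs_mul _ _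
        _ ≤ |X i j| * ρ := mul_le_mul_of_nonneg_left (hfeas j i) (abs_nonneg _)
        _ = ρ * |X i j| := mul_comm _ _
    have expand : ∑ i, ∑ j, X i j * (U j i - S j i)
        = (X * U).trace - (S * X).trace := by
      rw [hXU, hSX, ← Finset.sum_sub_distrib]
      congr 1; funext i
      rw [← Finset.sum_sub_distrib]
      congr 1; funext j
      ring
    rw [expand, htr] at key
    linarith
  have hlogsum : 0 ≤ Real.log X.det + Real.log U.det := by linarith
  -- Step 2: set A = √X and M = A * U * A.
  obtain ⟨A, hA, hAA⟩ : ∃ A : Matrix (Fin n) (Fin n) ℝ, A.PosSemidef ∧ A * A = X := by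
    open scoped MatrixOrder in
    exact ⟨CFC.sqrt X, (CFC.sqrt_nonneg X).posSemidef,
      CFC.sqrt_mul_sqrt_self X hX.posSemidef.nonneg⟩
  have hdetA : A.det * A.det = X.det := by rw [← det_mul, hAA]
  have hdetA0 : A.det ≠ 0 := by
    intro h; rw [h, mul_zero] at hdetA; exact hX.det_pos.ne hdetA
  set M := A * U * A with hMdef
  have hM : M.PosSemidef := by
    have := hU.posSemidef.mul_mul_conjTranspose_same A
    rwa [hA.1.eq] at this
  have hMtr : M.trace = (n : ℝ) := by
    rw [hMdef, Matrix.trace_mul_cycle, hAA, htr]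
  have hMdet : M.det = X.det * U.det := by
    rw [hMdef, det_mul, det_mul]
    rw [← hdetA]; ring
  have hMdetpos : 0 < M.det := by
    rw [hMdet]; exact mul_pos hX.det_pos hU.det_pos
  have hMlog : 0 ≤ Real.log M.det := by
    rw [hMdet, Real.log_mul hX.det_pos.ne' hU.det_pos.ne']
    exact hlogsum
  have hM1 : M = 1 := psd_trace_logdet_eq_one n M hM hMtr hMdetpos hMlog
  -- Step 3: A * U * A = 1 implies U = X⁻¹.
  have hAunit : IsUnit A.det := isUnit_iff_ne_zero.mpr hdetA0
  have hXinv : X⁻¹ = A⁻¹ * A⁻¹ := by rw [← hAA, Matrix.mul_inv_rev]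
  have : A⁻¹ * (A * U * A) * A⁻¹ = A⁻¹ * A⁻¹ := by rw [← hMdef, hM1]; simp
  rw [← Matrix.mul_assoc, ← Matrix.mul_assoc, Matrix.nonsing_inv_mul A hAunit,
    Matrix.one_mul, Matrix.mul_assoc, Matrix.mul_nonsing_inv A hAunit,
    Matrix.mul_one] at this
  rw [this, hXinv]
end

section
/- For positive definite matrices A, B ∈ S_n, log det A + log det B ≤ Tr(AB) − n, with equality if and only if B = A⁻¹. -/
open Matrix Finset

private lemma trace_eq_sum_ev {n : ℕ} {C : Matrix (Fin n) (Fin n) ℝ}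
    (hC : C.IsHermitian) : C.trace = ∑ i, hC.eigenvalues i := by
  conv_lhs => rw [hC.spectral_theorem, Unitary.conjStarAlgAut_apply]
  rw [Matrix.trace_mul_comm, ← mul_assoc,
    (Matrix.mem_unitaryGroup_iff').mp (hC.eigenvectorUnitary).2, one_mul]
  simp [Matrix.trace_diagonal]

private lemma key {n : ℕ} {C : Matrix (Fin n) (Fin n) ℝ} (hC : C.PosDef) :
    Real.log C.det ≤ C.trace - n ∧ (Real.log C.det = C.trace - n ↔ C = 1) := by
  have hH := hC.isHermitian
  set ev := hH.eigenvalues with hev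
  have hpos : ∀ i, 0 < ev i := fun i => hC.eigenvalues_pos i
  have hdet : C.det = ∏ i, ev i := by
    rw [hH.det_eq_prod_eigenvalues]; norm_num; rfl
  have hlog : Real.log C.det = ∑ i, Real.log (ev i) := by
    rw [hdet, Real.log_prod (fun i _ => (hpos i).ne')]
  have htr : C.trace = ∑ i, ev i := trace_eq_sum_ev hH
  have hle : ∀ i ∈ Finset.univ, Real.log (ev i) ≤ ev i - 1 :=
    fun i _ => Real.log_le_sub_one_of_pos (hpos i)
  have hsum : ∑ i, (ev i - 1) = C.trace - n := by
    rw [htr, Finset.sum_sub_distrib]; simp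
  constructor
  · rw [hlog, ← hsum]
    exact Finset.sum_le_sum hle
  constructor
  · intro heq
    have hone : ∀ i, ev i = 1 := by
      by_contra hcon
      push_neg at hcon
      obtain ⟨j, hj⟩ := hcon
      have : ∑ i, Real.log (ev i) < ∑ i, (ev i - 1) :=
        Finset.sum_lt_sum hle ⟨j, Finset.mem_univ j,
          Real.log_lt_sub_one_of_pos (hpos j) hj⟩
      rw [hsum, ← hlog] at this
      linarith
    have hdiag : Matrix.diagonal (RCLike.ofReal ∘ ev) = (1 : Matrix (Fin n) (Fin n) ℝ) := by
      have : (RCLike.ofReal ∘ ev : Fin n → ℝ) = fun _ => 1 := by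
        funext i; simp [hone i]
      rw [this, Matrix.diagonal_one]
    calc C = _ := hH.spectral_theorem
    _ = 1 := by
        rw [hdiag, map_one]
  · rintro rfl
    simp [Matrix.det_one, Matrix.trace_one]

/-- For positive definite `A, B`, `log det A + log det B ≤ Tr(AB) − n`, with
equality if and only if `B = A⁻¹`. -/
theorem logdet_sum_le_trace_sub_n (n : ℕ)
    (A B : Matrix (Fin n) (Fin n) ℝ)
    (hAs : A.IsSymm) (hA : A.PosDef)
    (hBs : B.IsSymm) (hB : B.PosDef) :
    Real.log A.det + Real.log B.det ≤ (A * B).trace - n ∧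
      (Real.log A.det + Real.log B.det = (A * B).trace - n ↔ B = A⁻¹) := by
  open scoped MatrixOrder in set S := CFC.sqrt A with hSdef
  open scoped MatrixOrder in have hS : S.PosSemidef := (CFC.sqrt_nonneg A).posSemidef
  open scoped MatrixOrder in have hSS : S * S = A := CFC.sqrt_mul_sqrt_self A hA.posSemidef.nonneg
  have hSH : Sᴴ = S := hS.1
  have hdetS : S.det ≠ 0 := by
    intro h
    have : A.det = 0 := by rw [← hSS, Matrix.det_mul, h, mul_zero]
    exact (hA.det_pos.ne') this
  have hSunit : IsUnit S := (Matrix.isUnit_iff_isUnit_det S).mpr (isUnit_iff_ne_zero.mpr hdetS)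
  have hSinv : S⁻¹ * S = 1 := Matrix.nonsing_inv_mul S (isUnit_iff_ne_zero.mpr hdetS)
  have hSinv' : S * S⁻¹ = 1 := Matrix.mul_nonsing_inv S (isUnit_iff_ne_zero.mpr hdetS)
  -- C := S * B * S is PosDef
  have hC : (S * B * S).PosDef := by
    refine Matrix.PosDef.of_dotProduct_mulVec_pos ?_ ?_
    · have := Matrix.isHermitian_conjTranspose_mul_mul S hB.1
      rwa [hSH] at this
    · intro x hx
      have hSx : S *ᵥ x ≠ 0 := by
        intro h
        apply hx
        have := congrArg (fun y => S⁻¹ *ᵥ y) h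
        simpa [Matrix.mulVec_mulVec, hSinv] using this
      have h1 : star x ⬝ᵥ (S * B * S) *ᵥ x
          = star (S *ᵥ x) ⬝ᵥ B *ᵥ (S *ᵥ x) := by
        have hT : Sᵀ = S := by
          rw [← Matrix.conjTranspose_eq_transpose_of_trivial]; exact hSH
        simp only [star_trivial, mul_assoc, ← Matrix.mulVec_mulVec,
          Matrix.dotProduct_mulVec, ← Matrix.mulVec_transpose, hT]
      rw [h1]
      exact hB.dotProduct_mulVec_pos hSx
  have htr : (S * B * S).trace = (A * B).trace := by
    rw [Matrix.trace_mul_comm, ← mul_assoc, hSS, Matrix.trace_mul_comm]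
  have hdet : (S * B * S).det = A.det * B.det := by
    rw [Matrix.det_mul, Matrix.det_mul, ← hSS, Matrix.det_mul]
    ring
  have hlog : Real.log (S * B * S).det = Real.log A.det + Real.log B.det := by
    rw [hdet, Real.log_mul hA.det_pos.ne' hB.det_pos.ne']
  have hiff : S * B * S = 1 ↔ B = A⁻¹ := by
    constructor
    · intro h
      have hB' : B = S⁻¹ * S⁻¹ := by
        have h2 : S⁻¹ * (S * B * S) * S⁻¹ = B := by
          rw [show S⁻¹ * (S * B * S) * S⁻¹ = (S⁻¹ * S) * (B * (S * S⁻¹)) from by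
            simp only [mul_assoc], hSinv, hSinv', one_mul, mul_one]
        rw [← h2, h, mul_one]
      rw [hB', ← Matrix.mul_inv_rev, hSS]
    · rintro rfl
      rw [← hSS, Matrix.mul_inv_rev,
        show S * (S⁻¹ * S⁻¹) * S = (S * S⁻¹) * (S⁻¹ * S) from by simp only [mul_assoc],
        hSinv, hSinv', one_mul]
  obtain ⟨h1, h2⟩ := key hC
  rw [hlog, htr, hiff] at *
  exact ⟨h1, h2⟩
end
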